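/- Let ℓ be a positive integer and let r₁, r₂, s₁, s₂ be positive integers with r₁ + r₂ = ℓ and s₁ + s₂ = ℓ, such that r_i ≠ s_j for all i, j ∈ {1,2} and gcd(r₁,r₂,s₁,s₂) = 1. Set S := Σ_{i=1}^{2} Σ_{j=1}^{2} (r_i + s_j − 2·gcd(r_i,s_j)). Then S > 5ℓ/2 − 5, i.e. 2S > 5ℓ − 10. -/
import Mathlib
set_option maxHeartbeats 4000000

private lemma pair_bound' {x y t : ℕ} (hx : 2 ≤ x) (hy : 2 ≤ y) (h : x * y ≤ t) :
    2 * x + 2 * y ≤ t + 4 := by nlinarith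

private lemma le_mul_left' {x y : ℕ} (hy : 0 < y) : x ≤ x * y :=
  Nat.le_mul_of_pos_right x hy

private lemma le_mul_right' {x y : ℕ} (hx : 0 < x) : y ≤ x * y :=
  Nat.le_mul_of_pos_left y hx

/-- **Lemma 2.13(3)**: if `r₁ + r₂ = ℓ = s₁ + s₂` with all four positive integers
satisfying `rᵢ ≠ sⱼ` for all `i,j` and `gcd(r₁,r₂,s₁,s₂) = 1`, then
`S := Σᵢ Σⱼ (rᵢ + sⱼ − 2·gcd(rᵢ,sⱼ))` satisfies `S > 5ℓ/2 − 5`, i.e. `2S > 5ℓ − 10`. -/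
theorem statement7 (ℓ r₁ r₂ s₁ s₂ : ℕ) (hℓ : 0 < ℓ)
    (hr₁ : 0 < r₁) (hr₂ : 0 < r₂) (hs₁ : 0 < s₁) (hs₂ : 0 < s₂)
    (hrsum : r₁ + r₂ = ℓ) (hssum : s₁ + s₂ = ℓ)
    (h11 : r₁ ≠ s₁) (h12 : r₁ ≠ s₂) (h21 : r₂ ≠ s₁) (h22 : r₂ ≠ s₂)
    (hgcd : Nat.gcd (Nat.gcd r₁ r₂) (Nat.gcd s₁ s₂) = 1) :
    5 * (ℓ : ℤ) - 10 <
      2 * (((r₁ : ℤ) + (s₁ : ℤ) - 2 * (Nat.gcd r₁ s₁ : ℤ))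
        + ((r₁ : ℤ) + (s₂ : ℤ) - 2 * (Nat.gcd r₁ s₂ : ℤ))
        + ((r₂ : ℤ) + (s₁ : ℤ) - 2 * (Nat.gcd r₂ s₁ : ℤ))
        + ((r₂ : ℤ) + (s₂ : ℤ) - 2 * (Nat.gcd r₂ s₂ : ℤ))) := by
  set a := Nat.gcd r₁ s₁ with ha_def
  set c := Nat.gcd r₁ s₂ with hc_def
  set f := Nat.gcd r₂ s₁ with hf_def
  set b := Nat.gcd r₂ s₂ with hb_def
  -- basic divisibilities
  have da_r : a ∣ r₁ := Nat.gcd_dvd_left _ _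
  have da_s : a ∣ s₁ := Nat.gcd_dvd_right _ _
  have dc_r : c ∣ r₁ := Nat.gcd_dvd_left _ _
  have dc_s : c ∣ s₂ := Nat.gcd_dvd_right _ _
  have df_r : f ∣ r₂ := Nat.gcd_dvd_left _ _
  have df_s : f ∣ s₁ := Nat.gcd_dvd_right _ _
  have db_r : b ∣ r₂ := Nat.gcd_dvd_left _ _
  have db_s : b ∣ s₂ := Nat.gcd_dvd_right _ _
  -- bounds
  have la_r : a ≤ r₁ := Nat.le_of_dvd hr₁ da_r
  have la_s : a ≤ s₁ := Nat.le_of_dvd hs₁ da_s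
  have lc_r : c ≤ r₁ := Nat.le_of_dvd hr₁ dc_r
  have lc_s : c ≤ s₂ := Nat.le_of_dvd hs₂ dc_s
  have lf_r : f ≤ r₂ := Nat.le_of_dvd hr₂ df_r
  have lf_s : f ≤ s₁ := Nat.le_of_dvd hs₁ df_s
  have lb_r : b ≤ r₂ := Nat.le_of_dvd hr₂ db_r
  have lb_s : b ≤ s₂ := Nat.le_of_dvd hs₂ db_s
  have ha0 : 0 < a := Nat.pos_of_dvd_of_pos da_r hr₁
  have hb0 : 0 < b := Nat.pos_of_dvd_of_pos db_r hr₂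
  have hc0 : 0 < c := Nat.pos_of_dvd_of_pos dc_r hr₁
  have hf0 : 0 < f := Nat.pos_of_dvd_of_pos df_r hr₂
  -- coprimality facts
  have cop_ab : Nat.Coprime a b := by
    have h : Nat.gcd a b ∣ Nat.gcd (Nat.gcd r₁ r₂) (Nat.gcd s₁ s₂) :=
      Nat.dvd_gcd
        (Nat.dvd_gcd ((Nat.gcd_dvd_left a b).trans da_r) ((Nat.gcd_dvd_right a b).trans db_r))
        (Nat.dvd_gcd ((Nat.gcd_dvd_left a b).trans da_s) ((Nat.gcd_dvd_right a b).trans db_s))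
    exact Nat.dvd_one.mp (hgcd ▸ h)
  have cop_cf : Nat.Coprime c f := by
    have h : Nat.gcd c f ∣ Nat.gcd (Nat.gcd r₁ r₂) (Nat.gcd s₁ s₂) :=
      Nat.dvd_gcd
        (Nat.dvd_gcd ((Nat.gcd_dvd_left c f).trans dc_r) ((Nat.gcd_dvd_right c f).trans df_r))
        (Nat.dvd_gcd ((Nat.gcd_dvd_right c f).trans df_s) ((Nat.gcd_dvd_left c f).trans dc_s))
    exact Nat.dvd_one.mp (hgcd ▸ h)
  -- shared-index coprimality: gcd divides all four numbers
  have cop_ac : Nat.Coprime a c := by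
    have g1 : Nat.gcd a c ∣ r₁ := (Nat.gcd_dvd_left a c).trans da_r
    have g2 : Nat.gcd a c ∣ s₁ := (Nat.gcd_dvd_left a c).trans da_s
    have g3 : Nat.gcd a c ∣ s₂ := (Nat.gcd_dvd_right a c).trans dc_s
    have g4 : Nat.gcd a c ∣ r₂ := by
      have h1 : Nat.gcd a c ∣ s₁ + s₂ := Nat.dvd_add g2 g3
      have h2 := Nat.dvd_sub h1 g1
      have : s₁ + s₂ - r₁ = r₂ := by omega
      rwa [this] at h2
    exact Nat.dvd_one.mp (hgcd ▸ Nat.dvd_gcd (Nat.dvd_gcd g1 g4) (Nat.dvd_gcd g2 g3))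
  have cop_bf : Nat.Coprime b f := by
    have g1 : Nat.gcd b f ∣ r₂ := (Nat.gcd_dvd_left b f).trans db_r
    have g2 : Nat.gcd b f ∣ s₂ := (Nat.gcd_dvd_left b f).trans db_s
    have g3 : Nat.gcd b f ∣ s₁ := (Nat.gcd_dvd_right b f).trans df_s
    have g4 : Nat.gcd b f ∣ r₁ := by
      have h1 : Nat.gcd b f ∣ s₁ + s₂ := Nat.dvd_add g3 g2
      have h2 := Nat.dvd_sub h1 g1
      have : s₁ + s₂ - r₂ = r₁ := by omega
      rwa [this] at h2
    exact Nat.dvd_one.mp (hgcd ▸ Nat.dvd_gcd (Nat.dvd_gcd g4 g1) (Nat.dvd_gcd g3 g2))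
  have cop_af : Nat.Coprime a f := by
    have g1 : Nat.gcd a f ∣ r₁ := (Nat.gcd_dvd_left a f).trans da_r
    have g2 : Nat.gcd a f ∣ s₁ := (Nat.gcd_dvd_left a f).trans da_s
    have g3 : Nat.gcd a f ∣ r₂ := (Nat.gcd_dvd_right a f).trans df_r
    have g4 : Nat.gcd a f ∣ s₂ := by
      have h1 : Nat.gcd a f ∣ r₁ + r₂ := Nat.dvd_add g1 g3
      have h2 := Nat.dvd_sub h1 g2
      have : r₁ + r₂ - s₁ = s₂ := by omega
      rwa [this] at h2
    exact Nat.dvd_one.mp (hgcd ▸ Nat.dvd_gcd (Nat.dvd_gcd g1 g3) (Nat.dvd_gcd g2 g4))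
  have cop_bc : Nat.Coprime b c := by
    have g1 : Nat.gcd b c ∣ r₂ := (Nat.gcd_dvd_left b c).trans db_r
    have g2 : Nat.gcd b c ∣ s₂ := (Nat.gcd_dvd_left b c).trans db_s
    have g3 : Nat.gcd b c ∣ r₁ := (Nat.gcd_dvd_right b c).trans dc_r
    have g4 : Nat.gcd b c ∣ s₁ := by
      have h1 : Nat.gcd b c ∣ r₁ + r₂ := Nat.dvd_add g3 g1
      have h2 := Nat.dvd_sub h1 g2
      have : r₁ + r₂ - s₂ = s₁ := by omega
      rwa [this] at h2
    exact Nat.dvd_one.mp (hgcd ▸ Nat.dvd_gcd (Nat.dvd_gcd g3 g1) (Nat.dvd_gcd g4 g2))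
  -- products dividing the numbers
  have pac : a * c ≤ r₁ := Nat.le_of_dvd hr₁ (Nat.Coprime.mul_dvd_of_dvd_of_dvd cop_ac da_r dc_r)
  have pbf : b * f ≤ r₂ := Nat.le_of_dvd hr₂ (Nat.Coprime.mul_dvd_of_dvd_of_dvd cop_bf db_r df_r)
  have paf : a * f ≤ s₁ := Nat.le_of_dvd hs₁ (Nat.Coprime.mul_dvd_of_dvd_of_dvd cop_af da_s df_s)
  have pbc : b * c ≤ s₂ := Nat.le_of_dvd hs₂ (Nat.Coprime.mul_dvd_of_dvd_of_dvd cop_bc db_s dc_s)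
  -- D = a*b divides r₁ - s₁ (in ℤ), E = c*f divides r₁ - s₂
  have hDdvd : ((a * b : ℕ) : ℤ) ∣ (r₁ : ℤ) - s₁ := by
    have h1 : (a : ℤ) ∣ (r₁ : ℤ) - s₁ :=
      dvd_sub (Int.natCast_dvd_natCast.mpr da_r) (Int.natCast_dvd_natCast.mpr da_s)
    have h2 : (b : ℤ) ∣ (r₁ : ℤ) - s₁ := by
      have hb' : (b : ℤ) ∣ (s₂ : ℤ) - r₂ :=
        dvd_sub (Int.natCast_dvd_natCast.mpr db_s) (Int.natCast_dvd_natCast.mpr db_r)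
      have heq : (r₁ : ℤ) - s₁ = (s₂ : ℤ) - r₂ := by omega
      rwa [heq]
    have hcop : IsCoprime (a : ℤ) (b : ℤ) := Nat.isCoprime_iff_coprime.mpr cop_ab
    push_cast
    exact hcop.mul_dvd h1 h2
  have hEdvd : ((c * f : ℕ) : ℤ) ∣ (r₁ : ℤ) - s₂ := by
    have h1 : (c : ℤ) ∣ (r₁ : ℤ) - s₂ :=
      dvd_sub (Int.natCast_dvd_natCast.mpr dc_r) (Int.natCast_dvd_natCast.mpr dc_s)
    have h2 : (f : ℤ) ∣ (r₁ : ℤ) - s₂ := by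
      have hf' : (f : ℤ) ∣ (s₁ : ℤ) - r₂ :=
        dvd_sub (Int.natCast_dvd_natCast.mpr df_s) (Int.natCast_dvd_natCast.mpr df_r)
      have heq : (r₁ : ℤ) - s₂ = (s₁ : ℤ) - r₂ := by omega
      rwa [heq]
    have hcop : IsCoprime (c : ℤ) (f : ℤ) := Nat.isCoprime_iff_coprime.mpr cop_cf
    push_cast
    exact hcop.mul_dvd h1 h2
  obtain ⟨D, hD⟩ : ∃ D : ℕ, D = a * b := ⟨a * b, rfl⟩
  obtain ⟨E, hE⟩ : ∃ E : ℕ, E = c * f := ⟨c * f, rfl⟩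
  have hDor : D + s₁ ≤ r₁ ∨ D + r₁ ≤ s₁ := by
    rw [← hD] at hDdvd
    rcases Nat.lt_or_ge r₁ s₁ with h | h
    · right
      have hpos : (0 : ℤ) < (s₁ : ℤ) - r₁ := by omega
      have hdvd' : ((D : ℕ) : ℤ) ∣ (s₁ : ℤ) - r₁ := by
        have := hDdvd.neg_right
        rwa [neg_sub] at this
      have := Int.le_of_dvd hpos hdvd'
      omega
    · left
      have hne : r₁ ≠ s₁ := h11
      have hpos : (0 : ℤ) < (r₁ : ℤ) - s₁ := by omega
      have := Int.le_of_dvd hpos hDdvd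
      omega
  have hEor : E + s₂ ≤ r₁ ∨ E + r₁ ≤ s₂ := by
    rw [← hE] at hEdvd
    rcases Nat.lt_or_ge r₁ s₂ with h | h
    · right
      have hpos : (0 : ℤ) < (s₂ : ℤ) - r₁ := by omega
      have hdvd' : ((E : ℕ) : ℤ) ∣ (s₂ : ℤ) - r₁ := by
        have := hEdvd.neg_right
        rwa [neg_sub] at this
      have := Int.le_of_dvd hpos hdvd'
      omega
    · left
      have hne : r₁ ≠ s₂ := h12
      have hpos : (0 : ℤ) < (r₁ : ℤ) - s₂ := by omega
      have := Int.le_of_dvd hpos hEdvd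
      omega
  have haD : a ≤ D := by rw [hD]; exact le_mul_left' hb0
  have hbD : b ≤ D := by rw [hD]; exact le_mul_right' ha0
  have hcE : c ≤ E := by rw [hE]; exact le_mul_left' hf0
  have hfE : f ≤ E := by rw [hE]; exact le_mul_right' hc0
  -- pair inequalities: if both ≥ 2 then 2x+2y ≤ xy+4 ≤ bound+4
  have Iac : 2 ≤ a → 2 ≤ c → 2 * a + 2 * c ≤ r₁ + 4 := fun h h' => pair_bound' h h' pac
  have Ibf : 2 ≤ b → 2 ≤ f → 2 * b + 2 * f ≤ r₂ + 4 := fun h h' => pair_bound' h h' pbf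
  have Iaf : 2 ≤ a → 2 ≤ f → 2 * a + 2 * f ≤ s₁ + 4 := fun h h' => pair_bound' h h' paf
  have Ibc : 2 ≤ b → 2 ≤ c → 2 * b + 2 * c ≤ s₂ + 4 := fun h h' => pair_bound' h h' pbc
  have ID : 2 ≤ a → 2 ≤ b → 2 * a + 2 * b ≤ D + 4 := by intro h h'; rw [hD]; exact pair_bound' h h' (le_refl _)
  have IE : 2 ≤ c → 2 ≤ f → 2 * c + 2 * f ≤ E + 4 := by intro h h'; rw [hE]; exact pair_bound' h h' (le_refl _)
  have key : 4 * (a + b + c + f) ≤ 3 * ℓ + 9 := by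
    clear hDdvd hEdvd hD hE da_r da_s dc_r dc_s df_r df_s db_r db_s
    clear cop_ab cop_cf cop_ac cop_bf cop_af cop_bc hgcd ha_def hb_def hc_def hf_def
    rcases Nat.lt_or_ge a 2 with ha2 | ha2 <;>
      rcases Nat.lt_or_ge b 2 with hb2 | hb2 <;>
      rcases Nat.lt_or_ge c 2 with hc2 | hc2 <;>
      rcases Nat.lt_or_ge f 2 with hf2 | hf2 <;>
      (try have K1 := Iac (by assumption) (by assumption)) <;>
      (try have K2 := Ibf (by assumption) (by assumption)) <;>
      (try have K3 := Iaf (by assumption) (by assumption)) <;>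
      (try have K4 := Ibc (by assumption) (by assumption)) <;>
      (try have K5 := ID (by assumption) (by assumption)) <;>
      (try have K6 := IE (by assumption) (by assumption)) <;>
      clear Iac Ibf Iaf Ibc ID IE <;>
      omega
  omega
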